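/- Let G : ℝ → ℝ be a 1-periodic continuously differentiable function, q ≥ 1 an integer, C* ≥ 0, and a : ℝ → ℝ a measurable function such that |a(x) − cos(2πqx)| ≤ C*/q for all x ∈ [0,1]. Then |∫₀¹ G(x)·a(x) dx| ≤ (1/q)·( C*·sup_{x∈[0,1]}|G(x)| + (1/(2π))·sup_{x∈[0,1]}|G′(x)| ). The same bound holds if cos(2πqx) is replaced by sin(2πqx) in the hypothesis on a. -/

import Mathlib

open MeasureTheory intervalIntegral Set

lemma aux10 (G : ℝ → ℝ) (hG : ContDiff ℝ 1 G) (hG10 : G 1 = G 0)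
    (q : ℕ) (hq : 1 ≤ q) (Cs : ℝ) (hCs : 0 ≤ Cs)
    (a T F : ℝ → ℝ) (hmeas : Measurable a) (hTcont : Continuous T)
    (hF : ∀ x, HasDerivAt F (T x) x) (hFb : F 1 = F 0)
    (hFB : ∀ x, |F x| ≤ 1 / (2 * Real.pi * q))
    (ha : ∀ x ∈ Set.Icc (0:ℝ) 1, |a x - T x| ≤ Cs / q) :
    |∫ x in (0:ℝ)..1, G x * a x|
      ≤ (1 / q) * (Cs * sSup ((fun x => |G x|) '' Set.Icc (0 : ℝ) 1)
          + (1 / (2 * Real.pi)) * sSup ((fun x => |deriv G x|) '' Set.Icc (0 : ℝ) 1)) := by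
  set M := sSup ((fun x => |G x|) '' Set.Icc (0 : ℝ) 1) with hM
  set M' := sSup ((fun x => |deriv G x|) '' Set.Icc (0 : ℝ) 1) with hM'
  have hGc : Continuous G := hG.continuous
  have hG' : Continuous (deriv G) := hG.continuous_deriv le_rfl
  have hMbd : ∀ x ∈ Set.Icc (0:ℝ) 1, |G x| ≤ M := fun x hx =>
    le_csSup (isCompact_Icc.bddAbove_image hGc.abs.continuousOn) ⟨x, hx, rfl⟩
  have hM'bd : ∀ x ∈ Set.Icc (0:ℝ) 1, |deriv G x| ≤ M' := fun x hx =>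
    le_csSup (isCompact_Icc.bddAbove_image hG'.abs.continuousOn) ⟨x, hx, rfl⟩
  have hM0 : 0 ≤ M := le_trans (abs_nonneg _) (hMbd 0 ⟨le_rfl, zero_le_one⟩)
  have hM'0 : 0 ≤ M' := le_trans (abs_nonneg _) (hM'bd 0 ⟨le_rfl, zero_le_one⟩)
  have hqpos : (0:ℝ) < q := by exact_mod_cast hq
  have hCsq : (0:ℝ) ≤ Cs / q := div_nonneg hCs hqpos.le
  -- integrability
  have hi1 : IntervalIntegrable (fun x => G x * (a x - T x)) volume 0 1 := by
    rw [intervalIntegrable_iff_integrableOn_Ioc_of_le zero_le_one]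
    apply (integrable_const (M * (Cs / q))).mono'
    · exact (hGc.measurable.mul (hmeas.sub hTcont.measurable)).aestronglyMeasurable
    · filter_upwards [ae_restrict_mem measurableSet_Ioc] with x hx
      have hx' : x ∈ Set.Icc (0:ℝ) 1 := Ioc_subset_Icc_self hx
      calc ‖G x * (a x - T x)‖ = |G x| * |a x - T x| := by
            rw [Real.norm_eq_abs, abs_mul]
        _ ≤ M * (Cs / q) := mul_le_mul (hMbd x hx') (ha x hx') (abs_nonneg _) hM0
  have hi2 : IntervalIntegrable (fun x => G x * T x) volume 0 1 :=
    (hGc.mul hTcont).intervalIntegrable 0 1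
  have key : (∫ x in (0:ℝ)..1, G x * a x)
      = (∫ x in (0:ℝ)..1, G x * (a x - T x)) + ∫ x in (0:ℝ)..1, G x * T x := by
    rw [← intervalIntegral.integral_add hi1 hi2]
    congr 1; funext x; ring
  -- integration by parts
  have hibp : (∫ x in (0:ℝ)..1, G x * T x)
      = G 1 * F 1 - G 0 * F 0 - ∫ x in (0:ℝ)..1, deriv G x * F x :=
    intervalIntegral.integral_mul_deriv_eq_deriv_mul
      (fun x _ => (hG.differentiable one_ne_zero x).hasDerivAt)
      (fun x _ => hF x)
      (hG'.intervalIntegrable 0 1) (hTcont.intervalIntegrable 0 1)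
  have hbd0 : G 1 * F 1 - G 0 * F 0 = 0 := by rw [hG10, hFb]; ring
  have b1 : |∫ x in (0:ℝ)..1, G x * (a x - T x)| ≤ M * (Cs / q) := by
    have := intervalIntegral.norm_integral_le_of_norm_le_const
      (C := M * (Cs / q)) (f := fun x => G x * (a x - T x)) (a := (0:ℝ)) (b := 1)
      (fun x hx => by
        have hx' : x ∈ Set.Icc (0:ℝ) 1 := Ioc_subset_Icc_self (by
          simpa [Set.uIoc_of_le (zero_le_one (α := ℝ))] using hx)
        calc ‖G x * (a x - T x)‖ = |G x| * |a x - T x| := by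
              rw [Real.norm_eq_abs, abs_mul]
          _ ≤ M * (Cs / q) := mul_le_mul (hMbd x hx') (ha x hx') (abs_nonneg _) hM0)
    simpa using this
  have b2 : |∫ x in (0:ℝ)..1, deriv G x * F x| ≤ M' * (1 / (2 * Real.pi * q)) := by
    have := intervalIntegral.norm_integral_le_of_norm_le_const
      (C := M' * (1 / (2 * Real.pi * q))) (f := fun x => deriv G x * F x) (a := (0:ℝ)) (b := 1)
      (fun x hx => by
        have hx' : x ∈ Set.Icc (0:ℝ) 1 := Ioc_subset_Icc_self (by
          simpa [Set.uIoc_of_le (zero_le_one (α := ℝ))] using hx)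
        calc ‖deriv G x * F x‖ = |deriv G x| * |F x| := by
              rw [Real.norm_eq_abs, abs_mul]
          _ ≤ M' * (1 / (2 * Real.pi * q)) :=
              mul_le_mul (hM'bd x hx') (hFB x) (abs_nonneg _) hM'0)
    simpa using this
  calc |∫ x in (0:ℝ)..1, G x * a x|
      = |(∫ x in (0:ℝ)..1, G x * (a x - T x)) - ∫ x in (0:ℝ)..1, deriv G x * F x| := by
        rw [key, hibp, hbd0, zero_sub, ← sub_eq_add_neg]
    _ ≤ |∫ x in (0:ℝ)..1, G x * (a x - T x)| + |∫ x in (0:ℝ)..1, deriv G x * F x| :=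
        abs_sub _ _
    _ ≤ M * (Cs / q) + M' * (1 / (2 * Real.pi * q)) := add_le_add b1 b2
    _ = (1 / q) * (Cs * M + (1 / (2 * Real.pi)) * M') := by
        field_simp

theorem stmt10 (G : ℝ → ℝ) (hper : ∀ x : ℝ, G (x + 1) = G x) (hG : ContDiff ℝ 1 G)
    (q : ℕ) (hq : 1 ≤ q) (Cs : ℝ) (hCs : 0 ≤ Cs)
    (a : ℝ → ℝ) (hmeas : Measurable a)
    (ha : (∀ x ∈ Set.Icc (0 : ℝ) 1, |a x - Real.cos (2 * Real.pi * q * x)| ≤ Cs / q) ∨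
          (∀ x ∈ Set.Icc (0 : ℝ) 1, |a x - Real.sin (2 * Real.pi * q * x)| ≤ Cs / q)) :
    |∫ x in (0:ℝ)..1, G x * a x|
      ≤ (1 / q) * (Cs * sSup ((fun x => |G x|) '' Set.Icc (0 : ℝ) 1)
          + (1 / (2 * Real.pi)) * sSup ((fun x => |deriv G x|) '' Set.Icc (0 : ℝ) 1)) := by
  have hG10 : G 1 = G 0 := by simpa using hper 0
  have hqpos : (0:ℝ) < q := by exact_mod_cast hq
  have hcpos : (0:ℝ) < 2 * Real.pi * q := by positivity
  have hcne : (2 * Real.pi * (q:ℝ)) ≠ 0 := hcpos.ne'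
  have hlin : ∀ x : ℝ, HasDerivAt (fun y : ℝ => 2 * Real.pi * q * y) (2 * Real.pi * q) x := by
    intro x
    simpa using (hasDerivAt_id x).const_mul (2 * Real.pi * (q:ℝ))
  rcases ha with ha | ha
  · -- cosine case
    apply aux10 G hG hG10 q hq Cs hCs a (fun x => Real.cos (2 * Real.pi * q * x))
      (fun x => Real.sin (2 * Real.pi * q * x) / (2 * Real.pi * q)) hmeas
      (by continuity) _ _ _ ha
    · intro x
      have h := ((Real.hasDerivAt_sin (2 * Real.pi * q * x)).comp x (hlin x)).div_const
        (2 * Real.pi * q)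
      simpa [mul_div_assoc, mul_div_cancel_right₀ _ hcne] using h
    · have h1 : (2:ℝ) * Real.pi * q * 1 = (2 * q : ℕ) * Real.pi := by push_cast; ring
      show Real.sin _ / _ = Real.sin _ / _
      rw [h1, Real.sin_nat_mul_pi, mul_zero, Real.sin_zero]
    · intro x
      rw [abs_div, abs_of_pos hcpos]
      gcongr
      exact Real.abs_sin_le_one _
  · -- sine case
    apply aux10 G hG hG10 q hq Cs hCs a (fun x => Real.sin (2 * Real.pi * q * x))
      (fun x => -Real.cos (2 * Real.pi * q * x) / (2 * Real.pi * q)) hmeas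
      (by continuity) _ _ _ ha
    · intro x
      have h := (((Real.hasDerivAt_cos (2 * Real.pi * q * x)).comp x (hlin x)).neg).div_const
        (2 * Real.pi * q)
      simpa [mul_div_assoc, mul_div_cancel_right₀ _ hcne] using h
    · have h1 : (2:ℝ) * Real.pi * q * 1 = (q:ℕ) * (2 * Real.pi) := by push_cast; ring
      show -Real.cos _ / _ = -Real.cos _ / _
      rw [h1, Real.cos_nat_mul_two_pi, mul_zero, Real.cos_zero]
    · intro x
      rw [abs_div, abs_of_pos hcpos, abs_neg]
      gcongr
      exact Real.abs_cos_le_one _
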